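/- Let q be an odd prime power, s an even divisor of q+1, h an integer with 1 ≤ h ≤ s/2, l = (q²-1)/s, and g a primitive element of F_{q²}. Then there exist u_0, ..., u_{h-1} ∈ F_q^* such that Σ_{k=0}^{h-1} g^{(2k+1)(μl - q - 1)} u_k = 0 for every integer μ with ⌈(s-h)/2⌉ + 1 ≤ μ ≤ ⌊(s+h)/2⌋ - 1. -/

import Mathlib

open Polynomial Finset

lemma zpow_eq_zpow_of_dvd {G : Type*} [Group G] (g : G) (a b : ℤ)
    (h : (orderOf g : ℤ) ∣ a - b) : g ^ a = g ^ b := by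
  obtain ⟨k, hk⟩ := h
  have ha : a = b + (orderOf g : ℤ) * k := by linarith
  rw [ha, zpow_add, zpow_mul, zpow_natCast, pow_orderOf_eq_one, one_zpow, mul_one]

lemma scale_coeff {F : Type*} [Field F] (β : F) :
    ∀ (m : ℕ) (c : F) (i : ℕ),
      (∏ j ∈ Finset.range m, (X - C (c * β * β ^ j))).coeff i * β ^ i
        = β ^ m * (∏ j ∈ Finset.range m, (X - C (c * β ^ j))).coeff i := by
  intro m
  induction m with
  | zero => intro c i; rcases i with _ | i <;> simp [coeff_one]
  | succ m ih =>
    intro c i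
    rw [Finset.prod_range_succ, Finset.prod_range_succ]
    cases i with
    | zero =>
      simp only [pow_zero, mul_one, Polynomial.mul_coeff_zero, coeff_sub, coeff_X_zero, coeff_C]
      have := ih c 0
      simp only [pow_zero, mul_one] at this
      rw [mul_comm _ ((0:F) - _), mul_comm _ ((0:F) - _)] at *
      simp only [zero_sub, neg_mul]
      rw [this]; simp only [if_true]; ring
    | succ a =>
      rw [coeff_mul_X_sub_C, coeff_mul_X_sub_C]
      linear_combination β * ih c a - c * β * β ^ m * ih c (a + 1)

lemma coeff_ne_zero_geom {F : Type*} [Field F] (β : F) (hβ0 : β ≠ 0) :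
    ∀ (m : ℕ), (∀ t, 0 < t → t ≤ m → β ^ t ≠ 1) →
      ∀ (c : F), c ≠ 0 → ∀ i ≤ m,
        (∏ j ∈ Finset.range m, (X - C (c * β ^ j))).coeff i ≠ 0 := by
  intro m
  induction m with
  | zero => intro _ c hc i hi; interval_cases i; simp
  | succ m ih =>
    intro hβ c hc i hi
    have ihm := ih (fun t ht htm => hβ t ht (htm.trans (Nat.le_succ m)))
    rcases Nat.eq_or_lt_of_le hi with heq | hlt
    · -- i = m + 1 : leading coefficient of a monic polynomial of degree m+1
      subst heq
      have hmonic : (∏ j ∈ Finset.range (m+1), (X - C (c * β ^ j))).Monic :=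
        monic_prod_of_monic _ _ (fun j _ => monic_X_sub_C _)
      have hdeg : (∏ j ∈ Finset.range (m+1), (X - C (c * β ^ j))).natDegree = m + 1 := by
        rw [natDegree_prod_of_monic _ _ (fun j _ => monic_X_sub_C _)]
        simp only [natDegree_X_sub_C, Finset.sum_const, card_range, smul_eq_mul, mul_one]
      have := hmonic.coeff_natDegree
      rw [hdeg] at this
      rw [this]; exact one_ne_zero
    · have him : i ≤ m := Nat.lt_succ_iff.mp hlt
      rcases Nat.eq_zero_or_pos i with rfl | hipos
      · rw [Finset.prod_range_succ, Polynomial.mul_coeff_zero]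
        refine mul_ne_zero (ihm c hc 0 (Nat.zero_le m)) ?_
        simp only [coeff_sub, coeff_X_zero, coeff_C, if_true, zero_sub, neg_ne_zero]
        exact mul_ne_zero hc (pow_ne_zero _ hβ0)
      · obtain ⟨a, rfl⟩ := Nat.exists_eq_succ_of_ne_zero (Nat.pos_iff_ne_zero.mp hipos)
        intro hzero
        have hP2 : ∏ j ∈ Finset.range (m+1), (X - C (c * β ^ j))
            = (∏ j ∈ Finset.range m, (X - C (c * β * β ^ j))) * (X - C c) := by
          rw [Finset.prod_range_succ']
          congr 1
          · exact Finset.prod_congr rfl (fun j _ => by rw [pow_succ]; ring_nf)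
          · rw [pow_zero, mul_one]
        set b1 := (∏ j ∈ Finset.range m, (X - C (c * β ^ j))).coeff a with hb1
        set b2 := (∏ j ∈ Finset.range m, (X - C (c * β ^ j))).coeff (a+1) with hb2
        set d1 := (∏ j ∈ Finset.range m, (X - C (c * β * β ^ j))).coeff a with hd1
        set d2 := (∏ j ∈ Finset.range m, (X - C (c * β * β ^ j))).coeff (a+1) with hd2
        have e1 : b1 - c * β ^ m * b2 = 0 := by
          have := hzero
          rw [Finset.prod_range_succ, coeff_mul_X_sub_C] at this
          linear_combination this
        have e2 : d1 - c * d2 = 0 := by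
          have := hzero
          rw [hP2, coeff_mul_X_sub_C] at this
          linear_combination this
        have s1 : d1 * β ^ a = β ^ m * b1 := scale_coeff β m c a
        have s2 : d2 * β ^ (a+1) = β ^ m * b2 := scale_coeff β m c (a+1)
        have hb2ne : b2 ≠ 0 := ihm c hc (a+1) him
        have h3 : c * (β ^ m * b2 * (β ^ (m+1) - 1)) = 0 := by
          linear_combination (-(β^(m+1))) * e1 + (-β) * s1 + (β^(a+1)) * e2 + c * s2
        have h4 : β ^ (m+1) - 1 = 0 := by
          rcases mul_eq_zero.mp h3 with h | h
          · exact absurd h hc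
          · rcases mul_eq_zero.mp h with h' | h'
            · rcases mul_eq_zero.mp h' with h'' | h''
              · exact absurd h'' (pow_ne_zero _ hβ0)
              · exact absurd h'' hb2ne
            · exact h'
        exact hβ (m+1) (Nat.succ_pos m) le_rfl (by rwa [sub_eq_zero] at h4)

theorem stmt_11 (q s h : ℕ) (hq : IsPrimePow q) (hqodd : Odd q)
    (hseven : Even s) (hsdvd : s ∣ q + 1)
    (hh : 1 ≤ h) (hhs : h ≤ s / 2)
    (F : Type*) [Field F] [Fintype F] (hF : Fintype.card F = q ^ 2)
    (g : Fˣ) (hg : orderOf g = q ^ 2 - 1) :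
    ∃ u : ℕ → F, (∀ k < h, u k ≠ 0 ∧ (u k) ^ q = u k) ∧
      ∀ μ : ℕ, (s - h + 1) / 2 + 1 ≤ μ → μ ≤ (s + h) / 2 - 1 →
        ∑ k ∈ Finset.range h,
          ((g ^ (((2 * k + 1 : ℕ) : ℤ) * ((μ : ℤ) * (((q ^ 2 - 1) / s : ℕ) : ℤ) - q - 1)) : Fˣ) : F)
            * u k = 0 := by
  classical
  obtain ⟨σ, hσ⟩ := hseven
  -- basic numeric facts
  have hq2 : 2 ≤ q := hq.two_le
  have hqmod : q % 2 = 1 := Nat.odd_iff.mp hqodd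
  have hq3 : 3 ≤ q := by omega
  have hsq : s ≤ q + 1 := Nat.le_of_dvd (by omega) hsdvd
  have hs2h : 2 * h ≤ s := by omega
  -- the case h = 1 is vacuous
  rcases Nat.lt_or_ge h 2 with h1 | h2
  · have hh1 : h = 1 := by omega
    subst hh1
    refine ⟨fun _ => 1, fun k _ => ⟨one_ne_zero, one_pow q⟩, ?_⟩
    intro μ hμ1 hμ2
    exfalso; omega
  -- main case
  set n := q ^ 2 - 1 with hn
  set l := n / s with hldef
  have hq2pos : 1 ≤ q ^ 2 := Nat.one_le_pow _ _ (by omega)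
  have hq1mul : (q + 1) * (q - 1) = n := by
    have : 1 ≤ q := by omega
    rw [hn]; zify [this, hq2pos]; ring
  have hsn : s ∣ n := hsdvd.trans ⟨q - 1, hq1mul.symm⟩
  have hln : s * l = n := Nat.mul_div_cancel' hsn
  have hn0 : 0 < n := hq1mul ▸ Nat.mul_pos (by omega) (by omega)
  have hl0 : 0 < l := by
    rcases Nat.eq_zero_or_pos l with h0 | h0
    · rw [h0, mul_zero] at hln; omega
    · exact h0
  set t := (q + 1) / s with htdef
  have hts : s * t = q + 1 := Nat.mul_div_cancel' hsdvd
  -- cast facts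
  have hnZ : (n : ℤ) = (q : ℤ) ^ 2 - 1 := by rw [hn]; push_cast [hq2pos]; ring
  have hlnZ : (s : ℤ) * (l : ℤ) = (n : ℤ) := by exact_mod_cast hln
  have htsZ : (s : ℤ) * (t : ℤ) = (q : ℤ) + 1 := by exact_mod_cast hts
  -- interval bounds
  set lo := (s - h + 1) / 2 + 1 with hlodef
  set hi := (s + h) / 2 - 1 with hhidef
  set m := hi + 1 - lo with hmdef
  have hlohi : lo + hi = s := by omega
  have hhis : hi ≤ s := by omega
  have hmh : m ≤ h - 1 := by omega
  have hmlt : 2 * m < s := by omega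
  -- units and roots
  have hzp : ∀ (a : ℤ) (k : ℕ), (g ^ a) ^ k = g ^ (a * k) := fun a k => by
    rw [← zpow_natCast (g ^ a) k, ← zpow_mul]
  set E : ℕ → ℤ := fun μ => (μ : ℤ) * l - q - 1 with hE
  set x : ℕ → Fˣ := fun μ => g ^ (E μ) with hx
  set r : ℕ → F := fun μ => ((x μ ^ 2 : Fˣ) : F) with hr
  set βu : Fˣ := g ^ ((2 * l : ℕ) : ℤ) with hβu
  set β : F := (βu : F) with hβ
  have hβ0 : β ≠ 0 := Units.ne_zero βu
  have hr0 : ∀ μ, r μ ≠ 0 := fun μ => Units.ne_zero _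
  have hrgeom : ∀ j : ℕ, r (lo + j) = r lo * β ^ j := by
    intro j
    have hu : x (lo + j) ^ 2 = x lo ^ 2 * βu ^ j := by
      simp only [hx, hβu]
      rw [hzp, hzp, hzp, ← zpow_add]
      congr 1
      simp only [hE]
      push_cast
      ring
    simp only [hr, hβ, hu]
    push_cast
    ring
  have hβne1 : ∀ t', 0 < t' → t' ≤ m → β ^ t' ≠ 1 := by
    intro t' ht0 htm hcontra
    have hucontra : βu ^ t' = 1 := by
      apply Units.ext
      push_cast
      exact hcontra
    rw [hβu, hzp] at hucontra
    have hdvd : ((orderOf g : ℕ) : ℤ) ∣ ((2 * l : ℕ) : ℤ) * (t' : ℤ) :=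
      orderOf_dvd_iff_zpow_eq_one.mpr hucontra
    rw [hg] at hdvd
    have hdvd' : n ∣ 2 * l * t' := by exact_mod_cast hdvd
    rw [← hln] at hdvd'
    have hdvds : s ∣ 2 * t' := by
      have h2 : (2 * t') * l ∣ s * l → False → True := fun _ _ => trivial
      have h3 : s * l ∣ (2 * t') * l := by
        rwa [show 2 * l * t' = (2 * t') * l by ring] at hdvd'
      exact (Nat.mul_dvd_mul_iff_right hl0).mp h3
    have := Nat.le_of_dvd (by omega) hdvds
    omega
  -- Frobenius
  obtain ⟨p, e, hpp, he, hqpe⟩ := hq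
  have hpp' : Nat.Prime p := Nat.prime_iff.mpr hpp
  haveI : Fact p.Prime := ⟨hpp'⟩
  have hchar : CharP F p := by
    have hcard : Fintype.card F = p ^ (2 * e) := by rw [hF, ← hqpe]; ring
    have hp'prime : (ringChar F).Prime := CharP.char_is_prime F (ringChar F)
    obtain ⟨n', hn'1, hn'2⟩ := FiniteField.card F (ringChar F)
    have hpdvd : p ∣ (ringChar F) ^ (n' : ℕ) := by
      rw [← hn'2, hcard]
      exact dvd_pow_self p (by omega)
    have heq : p = ringChar F :=
      (Nat.prime_dvd_prime_iff_eq hpp' hp'prime).mp (hpp'.dvd_of_dvd_pow hpdvd)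
    rw [heq]
    exact ringChar.charP F
  haveI := hchar
  haveI : ExpChar F p := ExpChar.prime hpp'
  set φ : F →+* F := iterateFrobenius F p e with hφ
  have hφdef : ∀ y : F, φ y = y ^ q := by
    intro y; rw [hφ, iterateFrobenius_def, hqpe]
  have hrq : ∀ μ ∈ Finset.Icc lo hi, (r μ) ^ q = r (s - μ) := by
    intro μ hμ
    obtain ⟨hμ1, hμ2⟩ := Finset.mem_Icc.mp hμ
    have hμs : μ ≤ s := le_trans hμ2 hhis
    have hu : (x μ ^ 2) ^ q = x (s - μ) ^ 2 := by
      simp only [hx]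
      rw [hzp, hzp, hzp]
      apply zpow_eq_zpow_of_dvd
      rw [hg]
      refine ⟨2 * (μ : ℤ) * t - 4, ?_⟩
      have hcast : ((s - μ : ℕ) : ℤ) = (s : ℤ) - (μ : ℤ) := by
        rw [Nat.cast_sub hμs]
      simp only [hE, hcast]
      linear_combination (2 * (μ : ℤ) * t - 2) * hlnZ + (-(2 * (μ : ℤ) * l)) * htsZ + 2 * hnZ
    simp only [hr]
    rw [← Units.val_pow_eq_pow_val, hu]
  -- the polynomial M
  set M : F[X] := ∏ μ ∈ Finset.Icc lo hi, (X - C (r μ)) with hM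
  have hMr : M = ∏ j ∈ Finset.range m, (X - C (r lo * β ^ j)) := by
    rw [hM]
    refine Finset.prod_bij' (fun μ _ => μ - lo) (fun j _ => lo + j) ?_ ?_ ?_ ?_ ?_
    · intro a ha; have := Finset.mem_Icc.mp ha; simp only [Finset.mem_range]; omega
    · intro b hb; have := Finset.mem_range.mp hb; simp only [Finset.mem_Icc]; omega
    · intro a ha; have := Finset.mem_Icc.mp ha; omega
    · intro b hb; have := Finset.mem_range.mp hb; omega
    · intro a ha
      have hmem := Finset.mem_Icc.mp ha
      rw [← hrgeom (a - lo), show lo + (a - lo) = a by omega]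
  have hMmonic : M.Monic := monic_prod_of_monic _ _ (fun j _ => monic_X_sub_C _)
  have hMdeg : M.natDegree = m := by
    rw [hM, natDegree_prod_of_monic _ _ (fun j _ => monic_X_sub_C _)]
    simp only [natDegree_X_sub_C, Finset.sum_const, Nat.card_Icc, smul_eq_mul, mul_one]
    rfl
  have hMcoeff : ∀ i ≤ m, M.coeff i ≠ 0 := by
    intro i hi'
    rw [hMr]
    exact coeff_ne_zero_geom β hβ0 m hβne1 (r lo) (hr0 lo) i hi'
  have hMmap : M.map φ = M := by
    rw [hM, Polynomial.map_prod]
    have hfac : ∀ μ ∈ Finset.Icc lo hi, (X - C (r μ)).map φ = X - C (r (s - μ)) := by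
      intro μ hμ
      rw [Polynomial.map_sub, Polynomial.map_X, Polynomial.map_C, hφdef, hrq μ hμ]
    rw [Finset.prod_congr rfl hfac]
    refine Finset.prod_bij' (fun μ _ => s - μ) (fun μ _ => s - μ) ?_ ?_ ?_ ?_ ?_
    · intro a ha; have := Finset.mem_Icc.mp ha; simp only [Finset.mem_Icc]; omega
    · intro a ha; have := Finset.mem_Icc.mp ha; simp only [Finset.mem_Icc]; omega
    · intro a ha; have := Finset.mem_Icc.mp ha; omega
    · intro a ha; have := Finset.mem_Icc.mp ha; omega
    · intro a ha; rfl
  have hMfix : ∀ k, (M.coeff k) ^ q = M.coeff k := by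
    intro k
    conv_rhs => rw [← hMmap]
    rw [coeff_map, hφdef]
  have hMeval : ∀ μ ∈ Finset.Icc lo hi, M.eval (r μ) = 0 := by
    intro μ hμ
    rw [hM, eval_prod]
    exact Finset.prod_eq_zero hμ (by rw [eval_sub, eval_X, eval_C, sub_self])
  -- construct Q
  obtain ⟨Q, hQdeg, hQcoeff, hQfix, hQeval⟩ :
      ∃ Q : F[X], Q.natDegree = h - 1 ∧ (∀ k < h, Q.coeff k ≠ 0) ∧
        (∀ k, (Q.coeff k) ^ q = Q.coeff k) ∧
        (∀ μ ∈ Finset.Icc lo hi, Q.eval (r μ) = 0) := by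
    rcases Nat.even_or_odd h with heh | hoh
    · -- h even : m = h - 1
      have hmval : m = h - 1 := by have := Nat.even_iff.mp heh; omega
      exact ⟨M, by rw [hMdeg]; omega, fun k hk => hMcoeff k (by omega), hMfix, hMeval⟩
    · -- h odd : m = h - 2
      have hodd2 : h % 2 = 1 := Nat.odd_iff.mp hoh
      have hmval : m = h - 2 := by omega
      set wu : Fˣ := g ^ ((q : ℤ) + 1) with hwu
      have hwuord : orderOf wu = q - 1 := by
        have h1 : wu = g ^ (q + 1) := by rw [hwu, ← zpow_natCast]; norm_num
        have h2 : Nat.gcd n (q + 1) = q + 1 := Nat.gcd_eq_right ⟨q - 1, hq1mul.symm⟩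
        rw [h1, orderOf_pow, hg, h2, ← hq1mul, Nat.mul_div_cancel_left _ (by omega)]
      have hworder : orderOf ((wu : Fˣ) : F) = q - 1 := by rw [orderOf_units, hwuord]
      set A := (Finset.range (q - 1)).image (fun j => ((wu : Fˣ) : F) ^ j) with hA
      have hAcard : A.card = q - 1 := by
        rw [hA, Finset.card_image_of_injOn, Finset.card_range]
        intro a ha b hb hab
        refine pow_injOn_Iio_orderOf ?_ ?_ hab
        · rw [Set.mem_Iio, hworder]; simpa using ha
        · rw [Set.mem_Iio, hworder]; simpa using hb
      set B := (Finset.Icc 1 m).image (fun i => M.coeff (i - 1) * (M.coeff i)⁻¹) with hB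
      have hBcard : B.card ≤ m := by
        refine le_trans Finset.card_image_le ?_
        simp [Nat.card_Icc]
      have hAB : 0 < (A \ B).card := by
        have := Finset.card_le_card_sdiff_add_card (s := A) (t := B)
        omega
      obtain ⟨c', hc'mem⟩ := Finset.card_pos.mp hAB
      obtain ⟨hc'A, hc'B⟩ := Finset.mem_sdiff.mp hc'mem
      obtain ⟨j, hjmem, hjc⟩ := Finset.mem_image.mp hc'A
      have hc'0 : c' ≠ 0 := by
        rw [← hjc, ← Units.val_pow_eq_pow_val]; exact Units.ne_zero _
      have hc'fix : c' ^ q = c' := by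
        rw [← hjc, ← Units.val_pow_eq_pow_val, ← Units.val_pow_eq_pow_val]
        congr 1
        rw [hwu, hzp, hzp]
        apply zpow_eq_zpow_of_dvd
        rw [hg]
        exact ⟨j, by push_cast [hnZ]; ring⟩
      refine ⟨M * (X - C c'), ?_, ?_, ?_, ?_⟩
      · rw [hMmonic.natDegree_mul (monic_X_sub_C c'), hMdeg, natDegree_X_sub_C]; omega
      · intro k hk
        rcases Nat.eq_zero_or_pos k with rfl | hk0
        · rw [Polynomial.mul_coeff_zero]
          refine mul_ne_zero (hMcoeff 0 (Nat.zero_le m)) ?_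
          simp only [coeff_sub, coeff_X_zero, coeff_C, if_pos rfl, zero_sub, neg_ne_zero]
          exact hc'0
        · obtain ⟨a, rfl⟩ := Nat.exists_eq_succ_of_ne_zero (by omega : k ≠ 0)
          rw [coeff_mul_X_sub_C]
          rcases Nat.lt_or_ge a m with ham | ham
          · intro hzero
            apply hc'B
            have hMa1 : M.coeff (a + 1) ≠ 0 := hMcoeff (a + 1) (by omega)
            have hc'eq : c' = M.coeff a * (M.coeff (a + 1))⁻¹ := by
              field_simp
              linear_combination -hzero
            have hmem : a + 1 ∈ Finset.Icc 1 m := by rw [Finset.mem_Icc]; omega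
            rw [hB]
            exact Finset.mem_image.mpr ⟨a + 1, hmem,
              by simp only [Nat.add_sub_cancel]; exact hc'eq.symm⟩
          · have ham' : a = m := by omega
            subst ham'
            rw [show M.coeff (m + 1) = 0 from coeff_eq_zero_of_natDegree_lt (by rw [hMdeg]; omega)]
            rw [show M.coeff m = 1 from by have := hMmonic.coeff_natDegree; rwa [hMdeg] at this]
            simp
      · intro k
        have hmap : (M * (X - C c')).map φ = M * (X - C c') := by
          rw [Polynomial.map_mul, hMmap, Polynomial.map_sub, Polynomial.map_X,
            Polynomial.map_C, hφdef, hc'fix]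
        conv_rhs => rw [← hmap]
        rw [coeff_map, hφdef]
      · intro μ hμ
        rw [eval_mul, hMeval μ hμ, zero_mul]
  -- final assembly
  refine ⟨fun k => Q.coeff k, fun k hk => ⟨hQcoeff k hk, hQfix k⟩, ?_⟩
  intro μ hμ1 hμ2
  have hμmem : μ ∈ Finset.Icc lo hi := Finset.mem_Icc.mpr ⟨hμ1, hμ2⟩
  have hterm : ∀ k : ℕ,
      ((g ^ (((2 * k + 1 : ℕ) : ℤ) * ((μ : ℤ) * (l : ℤ) - q - 1)) : Fˣ) : F)
        = ((x μ : F) ^ 2) ^ k * (x μ : F) := by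
    intro k
    have : ((2 * k + 1 : ℕ) : ℤ) * ((μ : ℤ) * (l : ℤ) - q - 1) = E μ * ((2 * k + 1 : ℕ) : ℤ) := by
      rw [hE]; ring
    rw [this, ← hzp (E μ) (2 * k + 1)]
    simp only [hx]
    push_cast
    rw [pow_succ, pow_mul]
  calc ∑ k ∈ Finset.range h,
        ((g ^ (((2 * k + 1 : ℕ) : ℤ) * ((μ : ℤ) * (l : ℤ) - q - 1)) : Fˣ) : F) * Q.coeff k
      = (x μ : F) * ∑ k ∈ Finset.range h, Q.coeff k * ((x μ : F) ^ 2) ^ k := by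
        rw [Finset.mul_sum]
        exact Finset.sum_congr rfl fun k _ => by rw [hterm k]; ring
    _ = (x μ : F) * Q.eval ((x μ : F) ^ 2) := by
        have hdlt : Q.natDegree < h := by rw [hQdeg]; omega
        rw [eval_eq_sum_range' hdlt]
    _ = 0 := by
        have : ((x μ : F) ^ 2) = r μ := by rw [hr]; simp
        rw [this, hQeval μ hμmem, mul_zero]
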